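/- Every real assignment (x,z) that satisfies all constraints of the Figure-instance LP (variable bounds x_a ∈ [0,1], z_P ≥ 0, connectivity, edge-buying, capacity, and shortest-path) together with the two strengthening inequalities z_{P1sv} ≥ z_{P1st} and z_{P2sv} ≥ z_{P2st} has objective value Σ_a x_a ≥ 9; more precisely, Σ_a x_a ≥ 9 + (z_{P2sv} − z_{P2st}). -/
import Mathlib


/-!
Figure-instance LP (from the MSPND strengthening proof).

Arcs are indexed by `Fin 14`:
  0 = a1=(s,v), 1 = b1=(s,b), 2 = b2=(b,v)        (thin arcs, capacity 1)
  3 = c1=(v,d), 4 = c2=(d,e), 5 = c3=(e,t),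
  6..13 = t1..t8 (the top arcs)                    (thick arcs, capacity 2)
Every arc has length 1 and one connection, so the arc-activation variable
`y_a` coincides with `x_a ∈ [0,1]`.

Paths are indexed by `Fin 5`:
  0 = P1sv = ⟨a1⟩, 1 = P2sv = ⟨b1,b2⟩,
  2 = P1st = ⟨a1,c1,c2,c3⟩, 3 = P2st = ⟨b1,b2,c1,c2,c3⟩, 4 = P3st = ⟨t1,…,t8⟩.

Demands: T(s,v) = 1, T(s,t) = 2.
-/

/-- The arc set of the path P1sv = ⟨a1⟩. -/
def P1sv : Finset (Fin 14) := {0}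
/-- The arc set of the path P2sv = ⟨b1,b2⟩. -/
def P2sv : Finset (Fin 14) := {1, 2}
/-- The arc set of the path P1st = ⟨a1,c1,c2,c3⟩. -/
def P1st : Finset (Fin 14) := {0, 3, 4, 5}
/-- The arc set of the path P2st = ⟨b1,b2,c1,c2,c3⟩. -/
def P2st : Finset (Fin 14) := {1, 2, 3, 4, 5}
/-- The arc set of the path P3st = ⟨t1,…,t8⟩. -/
def P3st : Finset (Fin 14) := {6, 7, 8, 9, 10, 11, 12, 13}

/-- Arc capacities: 1 on the thin arcs a1, b1, b2; 2 on the eleven thick arcs. -/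
def cap (a : Fin 14) : ℝ := if a.val < 3 then 1 else 2

/-- Feasibility for the LP relaxation of the MSPND ILP on the Figure instance:
variable bounds, connectivity, edge-buying, capacity, and shortest-path
constraints.  `x : Fin 14 → ℝ` are the arc variables and `z : Fin 5 → ℝ` the
path variables (indexed as described above). -/
structure FigureLPFeasible (x : Fin 14 → ℝ) (z : Fin 5 → ℝ) : Prop where
  x_nonneg : ∀ a : Fin 14, 0 ≤ x a
  x_le_one : ∀ a : Fin 14, x a ≤ 1
  z_nonneg : ∀ P : Fin 5, 0 ≤ z P
  /-- connectivity for the terminal pair (s,v) with demand 1 -/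
  conn_sv : 1 ≤ z 0 + z 1
  /-- connectivity for the terminal pair (s,t) with demand 2 -/
  conn_st : 1 ≤ z 2 + z 3 + z 4
  /-- edge-buying constraints: `z_P ≤ x_a` for every arc `a ∈ P` -/
  eb_P1sv : ∀ a ∈ P1sv, z 0 ≤ x a
  eb_P2sv : ∀ a ∈ P2sv, z 1 ≤ x a
  eb_P1st : ∀ a ∈ P1st, z 2 ≤ x a
  eb_P2st : ∀ a ∈ P2st, z 3 ≤ x a
  eb_P3st : ∀ a ∈ P3st, z 4 ≤ x a
  /-- capacity: demand 1 over s-v-paths plus demand 2 over s-t-paths through `a`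
  is at most `cap a * x a` -/
  capacity : ∀ a : Fin 14,
    1 * ((if a ∈ P1sv then z 0 else 0) + (if a ∈ P2sv then z 1 else 0)) +
      2 * ((if a ∈ P1st then z 2 else 0) + (if a ∈ P2st then z 3 else 0) +
        (if a ∈ P3st then z 4 else 0)) ≤ cap a * x a
  /-- shortest-path constraint for P1sv (length 1; strictly longer s-v-path: P2sv) -/
  sp_P1sv : z 1 ≤ 1 - ∑ a ∈ P1sv, x a
  /-- shortest-path constraint for P2sv (length 2; no strictly longer s-v-path) -/
  sp_P2sv : 0 ≤ 2 - ∑ a ∈ P2sv, x a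
  /-- shortest-path constraint for P1st (length 4; strictly longer: P2st, P3st) -/
  sp_P1st : z 3 + z 4 ≤ 4 - ∑ a ∈ P1st, x a
  /-- shortest-path constraint for P2st (length 5; strictly longer: P3st) -/
  sp_P2st : z 4 ≤ 5 - ∑ a ∈ P2st, x a
  /-- shortest-path constraint for P3st (length 8; no strictly longer s-t-path) -/
  sp_P3st : 0 ≤ 8 - ∑ a ∈ P3st, x a

/-- Objective value: total number of active connections, `Σ_a x_a`. -/
def objVal (x : Fin 14 → ℝ) : ℝ := ∑ a : Fin 14, x a

set_option maxHeartbeats 1000000 in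
/-- Every feasible point of the Figure-instance LP that additionally satisfies
the two strengthening inequalities `z_{P1sv} ≥ z_{P1st}` and
`z_{P2sv} ≥ z_{P2st}` has objective value at least 9; more precisely,
`Σ_a x_a ≥ 9 + (z_{P2sv} − z_{P2st})`. -/
theorem strengthened_LP_value_at_least_nine (x : Fin 14 → ℝ) (z : Fin 5 → ℝ)
    (hfeas : FigureLPFeasible x z)
    (hstr1 : z 0 ≥ z 2) (hstr2 : z 1 ≥ z 3) :
    9 ≤ objVal x ∧ 9 + (z 1 - z 3) ≤ objVal x := by
  obtain ⟨xnn, xle, znn, csv, cst, e1, e2, e3, e4, e5, cap', s1, s2, s3, s4, s5⟩ := hfeas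
  have mk : ∀ (i : Fin 14) (A B : ℝ), (1 * ((if i ∈ P1sv then z 0 else 0) + (if i ∈ P2sv then z 1 else 0)) +
      2 * ((if i ∈ P1st then z 2 else 0) + (if i ∈ P2st then z 3 else 0) +
        (if i ∈ P3st then z 4 else 0)) = A) → (cap i * x i = B) → A ≤ B := by
    intro i A B hA hB
    rw [← hA, ← hB]; exact cap' i
  have c0 : z 0 + 2 * z 2 ≤ x 0 := mk 0 _ _ (by simp (config := { decide := true }) [P1sv,P2sv,P1st,P2st,P3st]) (by simp (config := { decide := true }) [cap])
  have c1 : z 1 + 2 * z 3 ≤ x 1 := mk 1 _ _ (by simp (config := { decide := true }) [P1sv,P2sv,P1st,P2st,P3st]) (by simp (config := { decide := true }) [cap])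
  have c2 : z 1 + 2 * z 3 ≤ x 2 := mk 2 _ _ (by simp (config := { decide := true }) [P1sv,P2sv,P1st,P2st,P3st]) (by simp (config := { decide := true }) [cap])
  have c3 : 2 * (z 2 + z 3) ≤ 2 * x 3 := mk 3 _ _ (by simp (config := { decide := true }) [P1sv,P2sv,P1st,P2st,P3st]) (by simp (config := { decide := true }) [cap])
  have c4 : 2 * (z 2 + z 3) ≤ 2 * x 4 := mk 4 _ _ (by simp (config := { decide := true }) [P1sv,P2sv,P1st,P2st,P3st]) (by simp (config := { decide := true }) [cap])
  have c5 : 2 * (z 2 + z 3) ≤ 2 * x 5 := mk 5 _ _ (by simp (config := { decide := true }) [P1sv,P2sv,P1st,P2st,P3st]) (by simp (config := { decide := true }) [cap])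
  have c6 : 2 * z 4 ≤ 2 * x 6 := mk 6 _ _ (by simp (config := { decide := true }) [P1sv,P2sv,P1st,P2st,P3st]) (by simp (config := { decide := true }) [cap])
  have c7 : 2 * z 4 ≤ 2 * x 7 := mk 7 _ _ (by simp (config := { decide := true }) [P1sv,P2sv,P1st,P2st,P3st]) (by simp (config := { decide := true }) [cap])
  have c8 : 2 * z 4 ≤ 2 * x 8 := mk 8 _ _ (by simp (config := { decide := true }) [P1sv,P2sv,P1st,P2st,P3st]) (by simp (config := { decide := true }) [cap])
  have c9 : 2 * z 4 ≤ 2 * x 9 := mk 9 _ _ (by simp (config := { decide := true }) [P1sv,P2sv,P1st,P2st,P3st]) (by simp (config := { decide := true }) [cap])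
  have c10 : 2 * z 4 ≤ 2 * x 10 := mk 10 _ _ (by simp (config := { decide := true }) [P1sv,P2sv,P1st,P2st,P3st]) (by simp (config := { decide := true }) [cap])
  have c11 : 2 * z 4 ≤ 2 * x 11 := mk 11 _ _ (by simp (config := { decide := true }) [P1sv,P2sv,P1st,P2st,P3st]) (by simp (config := { decide := true }) [cap])
  have c12 : 2 * z 4 ≤ 2 * x 12 := mk 12 _ _ (by simp (config := { decide := true }) [P1sv,P2sv,P1st,P2st,P3st]) (by simp (config := { decide := true }) [cap])
  have c13 : 2 * z 4 ≤ 2 * x 13 := mk 13 _ _ (by simp (config := { decide := true }) [P1sv,P2sv,P1st,P2st,P3st]) (by simp (config := { decide := true }) [cap])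
  have eb10 : z 0 ≤ x 0 := e1 0 (by decide)
  have eb21 : z 1 ≤ x 1 := e2 1 (by decide)
  have eb22 : z 1 ≤ x 2 := e2 2 (by decide)
  have eb33 : z 2 ≤ x 3 := e3 3 (by decide)
  have eb43 : z 3 ≤ x 3 := e4 3 (by decide)
  have eb56 : z 4 ≤ x 6 := e5 6 (by decide)
  have hs1 : z 1 ≤ 1 - x 0 := by simpa [P1sv] using s1
  have hP1st : (∑ a ∈ P1st, x a) = x 0 + x 3 + x 4 + x 5 := by
    rw [P1st, Finset.sum_insert (by decide), Finset.sum_insert (by decide),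
      Finset.sum_insert (by decide), Finset.sum_singleton]
    ring
  have hP2st : (∑ a ∈ P2st, x a) = x 1 + x 2 + x 3 + x 4 + x 5 := by
    rw [P2st, Finset.sum_insert (by decide), Finset.sum_insert (by decide),
      Finset.sum_insert (by decide), Finset.sum_insert (by decide), Finset.sum_singleton]
    ring
  rw [hP1st] at s3
  rw [hP2st] at s4
  have huniv : (Finset.univ : Finset (Fin 14)) = {0,1,2,3,4,5,6,7,8,9,10,11,12,13} := by decide
  have hobj : objVal x = x 0 + x 1 + x 2 + x 3 + x 4 + x 5 + x 6 + x 7 + x 8 + x 9 + x 10 + x 11 + x 12 + x 13 := by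
    rw [objVal, huniv, Finset.sum_insert (by decide), Finset.sum_insert (by decide),
      Finset.sum_insert (by decide), Finset.sum_insert (by decide), Finset.sum_insert (by decide),
      Finset.sum_insert (by decide), Finset.sum_insert (by decide), Finset.sum_insert (by decide),
      Finset.sum_insert (by decide), Finset.sum_insert (by decide), Finset.sum_insert (by decide),
      Finset.sum_insert (by decide), Finset.sum_insert (by decide), Finset.sum_singleton]
    ring
  have z0 := znn 0; have z1 := znn 1; have z2 := znn 2; have z3 := znn 3; have z4 := znn 4
  rw [hobj]
  constructor <;>
    linarith [xnn 0, xnn 1, xnn 2, xnn 3, xnn 4, xnn 5, xle 0, xle 1, xle 2, xle 3, xle 4, xle 5]
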